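/- Let N be a positive integer, let A ⊆ {1,…,N} with |A| = δN where 0 < δ ≤ 1, and let k ≥ 2 be an integer. Then there exists an interval J ⊆ {1,…,N} with |J| ≥ N · exp(−4k · log(4k) · log(1/δ)) which is k-equidistributed with respect to A; that is, J can be partitioned into k consecutive subintervals J₁,…,J_k with |J_i| ≥ ⌊|J|/k⌋ for each i, such that |A ∩ J_i| ≥ δ·|J_i|/2 for every i = 1,…,k. -/

import Mathlib

open Finset

private lemma tele_aux (A : Finset ℕ) (e : ℕ → ℕ) :
    ∀ n, (∀ i < n, e i ≤ e (i + 1)) → e 0 ≤ e n ∧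
      ∑ i ∈ Finset.range n, (A ∩ Finset.Ioc (e i) (e (i + 1))).card
        = (A ∩ Finset.Ioc (e 0) (e n)).card ∧
      ∑ i ∈ Finset.range n, (e (i + 1) - e i) = e n - e 0 := by
  intro n
  induction n with
  | zero => simp
  | succ n ih =>
    intro h
    obtain ⟨h0n, hc, hl⟩ := ih (fun i hi => h i (by omega))
    have hn : e n ≤ e (n + 1) := h n (by omega)
    have h0 : e 0 ≤ e (n + 1) := le_trans h0n hn
    refine ⟨h0, ?_, ?_⟩
    · rw [Finset.sum_range_succ, hc]
      have hu : Finset.Ioc (e 0) (e n) ∪ Finset.Ioc (e n) (e (n + 1))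
          = Finset.Ioc (e 0) (e (n + 1)) := Finset.Ioc_union_Ioc_eq_Ioc h0n hn
      have hd : Disjoint (Finset.Ioc (e 0) (e n)) (Finset.Ioc (e n) (e (n + 1))) := by
        simp only [Finset.disjoint_left, Finset.mem_Ioc]; omega
      rw [← hu, Finset.inter_union_distrib_left,
        Finset.card_union_of_disjoint (hd.mono Finset.inter_subset_right Finset.inter_subset_right)]
    · rw [Finset.sum_range_succ, hl]
      omega

set_option maxHeartbeats 1000000 in
private lemma key_lemma (A : Finset ℕ) (δ : ℝ) (hδ0 : 0 < δ) (k : ℕ) (hk : 2 ≤ k) :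
    ∀ m : ℕ, ∀ a b : ℕ, a ≤ b → b - a = m →
      ∀ α : ℝ, δ ≤ α → α * m ≤ ((A ∩ Finset.Ioc a b).card : ℝ) →
      ∃ e : ℕ → ℕ, a ≤ e 0 ∧ e k ≤ b ∧ (∀ i < k, e i ≤ e (i + 1)) ∧
        (m : ℝ) * α ^ ((4 * (k : ℝ) + 1) * Real.log (2 * k)) ≤ ((e k - e 0 : ℕ) : ℝ) ∧
        ∀ i < k, (e k - e 0) / k ≤ e (i + 1) - e i ∧
          δ * ((e (i + 1) - e i : ℕ) : ℝ) / 2 ≤ ((A ∩ Finset.Ioc (e i) (e (i + 1))).card : ℝ) := by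
  intro m
  induction m using Nat.strong_induction_on with
  | _ m ih =>
  intro a b hab hba α hδα hcnt
  have hk0 : 0 < k := by omega
  have hkR : (0 : ℝ) < (k : ℝ) := by positivity
  have hb : b = a + m := by omega
  subst hb
  set C : ℝ := (4 * (k : ℝ) + 1) * Real.log (2 * k) with hC
  have hk2R : (2 : ℝ) ≤ (k : ℝ) := by exact_mod_cast hk
  have hlog2k : 0 ≤ Real.log (2 * (k : ℝ)) := by
    apply Real.log_nonneg; nlinarith
  have hC0 : 0 ≤ C := by positivity
  have hα0 : 0 < α := lt_of_lt_of_le hδ0 hδα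
  set E : ℕ → ℕ := fun i => a + i * m / k with hE
  have hE0 : E 0 = a := by simp [hE]
  have hEk : E k = a + m := by simp [hE, Nat.mul_div_cancel_left m hk0]
  have hEmono : ∀ i j, i ≤ j → E i ≤ E j := by
    intro i j hij
    exact Nat.add_le_add_left (Nat.div_le_div_right (Nat.mul_le_mul_right m hij)) a
  have hElen : ∀ i, m / k ≤ E (i + 1) - E i := by
    intro i
    have h1 : m / k + i * m / k ≤ (i + 1) * m / k := by
      rw [Nat.le_div_iff_mul_le hk0, add_mul, add_one_mul]
      have h1 := Nat.div_mul_le_self m k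
      have h2 := Nat.div_mul_le_self (i * m) k
      omega
    have h2 : E i ≤ E (i + 1) := hEmono i (i + 1) (by omega)
    simp only [hE] at h2 ⊢
    omega
  have hEd : E k - E 0 = m := by rw [hE0, hEk]; omega
  have hCL : ∀ i, (A ∩ Finset.Ioc (E i) (E (i + 1))).card ≤ E (i + 1) - E i := by
    intro i
    calc (A ∩ Finset.Ioc (E i) (E (i + 1))).card ≤ (Finset.Ioc (E i) (E (i + 1))).card :=
          Finset.card_le_card Finset.inter_subset_right
      _ = E (i + 1) - E i := Nat.card_Ioc _ _
  by_cases hgood : ∀ i < k, δ * ((E (i + 1) - E i : ℕ) : ℝ) / 2 ≤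
      ((A ∩ Finset.Ioc (E i) (E (i + 1))).card : ℝ)
  · refine ⟨E, le_of_eq hE0.symm, le_of_eq hEk, fun i _ => hEmono i (i + 1) (by omega), ?_,
      fun i hi => ⟨by rw [hEd]; exact hElen i, hgood i hi⟩⟩
    rw [hEd]
    rcases Nat.eq_zero_or_pos m with hm0 | hm0
    · simp [hm0]
    · have hm' : (0 : ℝ) < (m : ℝ) := by positivity
      have hα1 : α ≤ 1 := by
        have h1 : ((A ∩ Finset.Ioc a (a + m)).card : ℝ) ≤ (m : ℝ) := by
          have := hCL  -- unused
          have h2 : (A ∩ Finset.Ioc a (a + m)).card ≤ m := by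
            calc (A ∩ Finset.Ioc a (a + m)).card ≤ (Finset.Ioc a (a + m)).card :=
                  Finset.card_le_card Finset.inter_subset_right
              _ = m := by rw [Nat.card_Ioc]; omega
          exact_mod_cast h2
        nlinarith
      have hp : α ^ C ≤ 1 := Real.rpow_le_one hα0.le hα1 hC0
      nlinarith
  · push_neg at hgood
    obtain ⟨i₀, hi₀k, hbad⟩ := hgood
    have hℓ0pos : 0 < E (i₀ + 1) - E i₀ := by
      by_contra h
      push_neg at h
      interval_cases h' : E (i₀ + 1) - E i₀
      · simp [h'] at hbad
        have : (0:ℝ) ≤ ((A ∩ Finset.Ioc (E i₀) (E (i₀ + 1))).card : ℝ) := by positivity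
        nlinarith
    obtain ⟨hE0k, hcsum, hlsum⟩ := tele_aux A E k (fun i _ => hEmono i (i + 1) (by omega))
    rw [hE0, hEk] at hcsum
    rw [hEd] at hlsum
    have hmem : i₀ ∈ Finset.range k := Finset.mem_range.mpr hi₀k
    have hcsum' : (A ∩ Finset.Ioc (E i₀) (E (i₀ + 1))).card +
        ∑ j ∈ (Finset.range k).erase i₀, (A ∩ Finset.Ioc (E j) (E (j + 1))).card
        = (A ∩ Finset.Ioc a (a + m)).card :=
      (Finset.add_sum_erase (Finset.range k)
        (fun j => (A ∩ Finset.Ioc (E j) (E (j + 1))).card) hmem).trans hcsum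
    have hlsum' : (E (i₀ + 1) - E i₀) +
        ∑ j ∈ (Finset.range k).erase i₀, (E (j + 1) - E j) = m :=
      (Finset.add_sum_erase (Finset.range k) (fun j => E (j + 1) - E j) hmem).trans hlsum
    have hℓ0le : E (i₀ + 1) - E i₀ ≤ m := by omega
    have hmpos : 0 < m := lt_of_lt_of_le hℓ0pos hℓ0le
    have hmR : (0 : ℝ) < (m : ℝ) := by positivity
    have hctotle : (A ∩ Finset.Ioc a (a + m)).card ≤ m := by
      calc (A ∩ Finset.Ioc a (a + m)).card ≤ (Finset.Ioc a (a + m)).card :=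
            Finset.card_le_card Finset.inter_subset_right
        _ = m := by rw [Nat.card_Ioc]; omega
    have hα1 : α ≤ 1 := by
      have h1 : ((A ∩ Finset.Ioc a (a + m)).card : ℝ) ≤ (m : ℝ) := by exact_mod_cast hctotle
      nlinarith
    have hℓ0lt : E (i₀ + 1) - E i₀ < m := by
      by_contra h
      push_neg at h
      have hℓ0m : E (i₀ + 1) - E i₀ = m := le_antisymm hℓ0le h
      have hsle : ∑ j ∈ (Finset.range k).erase i₀, (A ∩ Finset.Ioc (E j) (E (j + 1))).card ≤
          ∑ j ∈ (Finset.range k).erase i₀, (E (j + 1) - E j) :=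
        Finset.sum_le_sum (fun j _ => hCL j)
      have hcz : ∑ j ∈ (Finset.range k).erase i₀, (A ∩ Finset.Ioc (E j) (E (j + 1))).card = 0 := by
        omega
      have hce : (A ∩ Finset.Ioc (E i₀) (E (i₀ + 1))).card = (A ∩ Finset.Ioc a (a + m)).card := by
        omega
      rw [hce, hℓ0m] at hbad
      nlinarith
    have hmlR : (0 : ℝ) < (m : ℝ) - ((E (i₀ + 1) - E i₀ : ℕ) : ℝ) := by
      have h : ((E (i₀ + 1) - E i₀ : ℕ) : ℝ) < (m : ℝ) := Nat.cast_lt.mpr hℓ0lt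
      linarith
    have hexist : ∃ j ∈ (Finset.range k).erase i₀, 0 < E (j + 1) - E j ∧
        (((A ∩ Finset.Ioc a (a + m)).card : ℝ) - ((A ∩ Finset.Ioc (E i₀) (E (i₀ + 1))).card : ℝ))
          * ((E (j + 1) - E j : ℕ) : ℝ)
        ≤ ((A ∩ Finset.Ioc (E j) (E (j + 1))).card : ℝ)
          * ((m : ℝ) - ((E (i₀ + 1) - E i₀ : ℕ) : ℝ)) := by
      by_contra hcon
      push_neg at hcon
      have hne : ∃ j ∈ (Finset.range k).erase i₀, 0 < E (j + 1) - E j := by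
        by_contra h2
        push_neg at h2
        have : ∑ j ∈ (Finset.range k).erase i₀, (E (j + 1) - E j) = 0 :=
          Finset.sum_eq_zero (fun j hj => by have := h2 j hj; omega)
        omega
      have hweak : ∀ j ∈ (Finset.range k).erase i₀,
          ((A ∩ Finset.Ioc (E j) (E (j + 1))).card : ℝ) * ((m : ℝ) - ((E (i₀ + 1) - E i₀ : ℕ) : ℝ))
          ≤ (((A ∩ Finset.Ioc a (a + m)).card : ℝ) - ((A ∩ Finset.Ioc (E i₀) (E (i₀ + 1))).card : ℝ))
            * ((E (j + 1) - E j : ℕ) : ℝ) := by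
        intro j hj
        rcases Nat.eq_zero_or_pos (E (j + 1) - E j) with h0 | h0
        · have hc0 : (A ∩ Finset.Ioc (E j) (E (j + 1))).card = 0 := by have := hCL j; omega
          rw [hc0, h0]
          simp
        · exact le_of_lt (hcon j hj h0)
      obtain ⟨j₁, hj₁, hLj₁⟩ := hne
      have hstrict := Finset.sum_lt_sum hweak ⟨j₁, hj₁, hcon j₁ hj₁ hLj₁⟩
      rw [← Finset.sum_mul, ← Finset.mul_sum] at hstrict
      have hc1 : ∑ j ∈ (Finset.range k).erase i₀,
          ((A ∩ Finset.Ioc (E j) (E (j + 1))).card : ℝ)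
          = ((A ∩ Finset.Ioc a (a + m)).card : ℝ)
            - ((A ∩ Finset.Ioc (E i₀) (E (i₀ + 1))).card : ℝ) := by
        have h := congrArg (Nat.cast (R := ℝ)) hcsum'
        push_cast at h
        linarith
      have hl1 : ∑ j ∈ (Finset.range k).erase i₀, ((E (j + 1) - E j : ℕ) : ℝ)
          = (m : ℝ) - ((E (i₀ + 1) - E i₀ : ℕ) : ℝ) := by
        have h := congrArg (Nat.cast (R := ℝ)) hlsum'
        push_cast at h
        linarith
      rw [hc1, hl1] at hstrict
      exact lt_irrefl _ hstrict
    obtain ⟨j, hjmem, hLjpos, hkey⟩ := hexist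
    have hjk : j < k := Finset.mem_range.mp (Finset.mem_of_mem_erase hjmem)
    have h2k : ∀ ℓ : ℕ, m / k ≤ ℓ → 1 ≤ ℓ → m < 2 * k * ℓ := by
      intro ℓ h1 h2
      have hdd := Nat.div_add_mod m k
      have hmod : m % k < k := Nat.mod_lt m hk0
      calc m < k * (m / k) + k := by omega
        _ ≤ k * ℓ + k * ℓ := add_le_add (Nat.mul_le_mul_left k h1) (Nat.le_mul_of_pos_right k h2)
        _ = 2 * k * ℓ := by ring
    have h2kℓ0R : (m : ℝ) ≤ 2 * (k : ℝ) * ((E (i₀ + 1) - E i₀ : ℕ) : ℝ) := by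
      have h := h2k _ (hElen i₀) hℓ0pos
      exact_mod_cast le_of_lt (by exact_mod_cast h)
    have h2kLjR : (m : ℝ) ≤ 2 * (k : ℝ) * ((E (j + 1) - E j : ℕ) : ℝ) := by
      have h := h2k _ (hElen j) hLjpos
      exact_mod_cast le_of_lt (by exact_mod_cast h)
    have hLjR : (0 : ℝ) < ((E (j + 1) - E j : ℕ) : ℝ) := by exact_mod_cast hLjpos
    have hα' : δ ≤ α * (1 + 1 / (4 * (k : ℝ))) := by
      have h1 : (0 : ℝ) < 1 / (4 * (k : ℝ)) := by positivity
      nlinarith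
    have hℓ0nn : (0 : ℝ) ≤ ((E (i₀ + 1) - E i₀ : ℕ) : ℝ) := by positivity
    have h4k : (0 : ℝ) < 4 * (k : ℝ) := by positivity
    have hstep : α * (1 + 1 / (4 * (k : ℝ))) * ((m : ℝ) - ((E (i₀ + 1) - E i₀ : ℕ) : ℝ))
        ≤ α * (m : ℝ) - α * ((E (i₀ + 1) - E i₀ : ℕ) : ℝ) / 2 := by
      have expand : α * (1 + 1 / (4 * (k : ℝ))) * ((m : ℝ) - ((E (i₀ + 1) - E i₀ : ℕ) : ℝ))
          = α * ((m : ℝ) - ((E (i₀ + 1) - E i₀ : ℕ) : ℝ))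
            + (α * ((m : ℝ) - ((E (i₀ + 1) - E i₀ : ℕ) : ℝ))) / (4 * (k : ℝ)) := by
        field_simp
      rw [expand]
      have h1 : α * ((m : ℝ) - ((E (i₀ + 1) - E i₀ : ℕ) : ℝ))
          ≤ α * (2 * (k : ℝ) * ((E (i₀ + 1) - E i₀ : ℕ) : ℝ)) :=
        mul_le_mul_of_nonneg_left (by linarith) hα0.le
      have h2 : α * ((m : ℝ) - ((E (i₀ + 1) - E i₀ : ℕ) : ℝ)) / (4 * (k : ℝ))
          ≤ α * (2 * (k : ℝ) * ((E (i₀ + 1) - E i₀ : ℕ) : ℝ)) / (4 * (k : ℝ)) := by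
        gcongr
      have h3 : α * (2 * (k : ℝ) * ((E (i₀ + 1) - E i₀ : ℕ) : ℝ)) / (4 * (k : ℝ))
          = α * ((E (i₀ + 1) - E i₀ : ℕ) : ℝ) / 2 := by
        field_simp
        ring
      linarith
    have he1 : α * (m : ℝ) - α * ((E (i₀ + 1) - E i₀ : ℕ) : ℝ) / 2
        ≤ ((A ∩ Finset.Ioc a (a + m)).card : ℝ)
          - ((A ∩ Finset.Ioc (E i₀) (E (i₀ + 1))).card : ℝ) := by
      have hdℓ : δ * ((E (i₀ + 1) - E i₀ : ℕ) : ℝ) ≤ α * ((E (i₀ + 1) - E i₀ : ℕ) : ℝ) :=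
        mul_le_mul_of_nonneg_right hδα hℓ0nn
      linarith
    have hcnt' : α * (1 + 1 / (4 * (k : ℝ))) * ((E (j + 1) - E j : ℕ) : ℝ)
        ≤ ((A ∩ Finset.Ioc (E j) (E (j + 1))).card : ℝ) := by
      rw [← mul_le_mul_iff_of_pos_right hmlR]
      calc α * (1 + 1 / (4 * (k : ℝ))) * ((E (j + 1) - E j : ℕ) : ℝ)
            * ((m : ℝ) - ((E (i₀ + 1) - E i₀ : ℕ) : ℝ))
          = (α * (1 + 1 / (4 * (k : ℝ))) * ((m : ℝ) - ((E (i₀ + 1) - E i₀ : ℕ) : ℝ)))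
            * ((E (j + 1) - E j : ℕ) : ℝ) := by ring
        _ ≤ (((A ∩ Finset.Ioc a (a + m)).card : ℝ)
              - ((A ∩ Finset.Ioc (E i₀) (E (i₀ + 1))).card : ℝ))
            * ((E (j + 1) - E j : ℕ) : ℝ) :=
          mul_le_mul_of_nonneg_right (le_trans hstep he1) hLjR.le
        _ ≤ _ := hkey
    have hLjlt : E (j + 1) - E j < m := by
      have h : E (j + 1) - E j ≤ ∑ j ∈ (Finset.range k).erase i₀, (E (j + 1) - E j) :=
        Finset.single_le_sum (f := fun i => E (i + 1) - E i) (fun i _ => Nat.zero_le _) hjmem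
      omega
    have hEj : E j ≤ E (j + 1) := hEmono j (j + 1) (by omega)
    obtain ⟨e, he0, hek, hemono, hlen, hparts⟩ := ih (E (j + 1) - E j) hLjlt (E j) (E (j + 1))
      hEj rfl (α * (1 + 1 / (4 * (k : ℝ)))) hα' hcnt'
    refine ⟨e, ?_, ?_, hemono, ?_, hparts⟩
    · calc a = E 0 := hE0.symm
        _ ≤ E j := hEmono 0 j (Nat.zero_le j)
        _ ≤ e 0 := he0
    · calc e k ≤ E (j + 1) := hek
        _ ≤ E k := hEmono (j + 1) k hjk
        _ = a + m := hEk
    · have hxpos : (0 : ℝ) < 1 + 1 / (4 * (k : ℝ)) := by positivity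
      have hlog : 1 / (4 * (k : ℝ) + 1) ≤ Real.log (1 + 1 / (4 * (k : ℝ))) := by
        have h := Real.log_le_sub_one_of_pos (x := (1 + 1 / (4 * (k : ℝ)))⁻¹) (by positivity)
        rw [Real.log_inv] at h
        have hinv : (1 + 1 / (4 * (k : ℝ)))⁻¹ = 1 - 1 / (4 * (k : ℝ) + 1) := by
          have h1 : (4 * (k : ℝ)) ≠ 0 := by positivity
          have h2 : (4 * (k : ℝ) + 1) ≠ 0 := by positivity
          field_simp
          ring
        rw [hinv] at h
        linarith
      have hCdef : Real.log (2 * (k : ℝ)) ≤ Real.log (1 + 1 / (4 * (k : ℝ))) * C := by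
        rw [hC]
        have h4k1 : (0 : ℝ) < 4 * (k : ℝ) + 1 := by positivity
        have h1 : 1 ≤ Real.log (1 + 1 / (4 * (k : ℝ))) * (4 * (k : ℝ) + 1) := by
          calc (1 : ℝ) = 1 / (4 * (k : ℝ) + 1) * (4 * (k : ℝ) + 1) := by field_simp
            _ ≤ _ := mul_le_mul_of_nonneg_right hlog h4k1.le
        nlinarith [mul_nonneg (by linarith :
          (0 : ℝ) ≤ Real.log (1 + 1 / (4 * (k : ℝ))) * (4 * (k : ℝ) + 1) - 1) hlog2k]
      have hpow : 2 * (k : ℝ) ≤ (1 + 1 / (4 * (k : ℝ))) ^ C := by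
        rw [Real.rpow_def_of_pos hxpos]
        calc 2 * (k : ℝ) = Real.exp (Real.log (2 * (k : ℝ))) :=
              (Real.exp_log (by positivity)).symm
          _ ≤ _ := Real.exp_le_exp.mpr hCdef
      have hmul : (α * (1 + 1 / (4 * (k : ℝ)))) ^ C = α ^ C * (1 + 1 / (4 * (k : ℝ))) ^ C :=
        Real.mul_rpow hα0.le hxpos.le
      have hαC : (0 : ℝ) < α ^ C := Real.rpow_pos_of_pos hα0 C
      have hmono2 : (m : ℝ) * α ^ C
          ≤ ((E (j + 1) - E j : ℕ) : ℝ) * (α * (1 + 1 / (4 * (k : ℝ)))) ^ C := by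
        rw [hmul]
        calc (m : ℝ) * α ^ C ≤ 2 * (k : ℝ) * ((E (j + 1) - E j : ℕ) : ℝ) * α ^ C :=
              mul_le_mul_of_nonneg_right h2kLjR hαC.le
          _ = ((E (j + 1) - E j : ℕ) : ℝ) * (2 * (k : ℝ) * α ^ C) := by ring
          _ ≤ ((E (j + 1) - E j : ℕ) : ℝ) * ((1 + 1 / (4 * (k : ℝ))) ^ C * α ^ C) :=
              mul_le_mul_of_nonneg_left (mul_le_mul_of_nonneg_right hpow hαC.le) hLjR.le
          _ = ((E (j + 1) - E j : ℕ) : ℝ) * (α ^ C * (1 + 1 / (4 * (k : ℝ))) ^ C) := by ring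
      exact le_trans hmono2 hlen


/-- Every set `A ⊆ {1,…,N}` of density `δ` admits a `k`-equidistributed interval
`J` of length at least `N·exp(-4k·log(4k)·log(1/δ))`: `J = Ioc (e 0) (e k)` is
partitioned into the `k` consecutive subintervals `Jᵢ = Ioc (e i) (e (i+1))`,
each of length at least `⌊|J|/k⌋` and carrying at least half of the expected
number `δ|Jᵢ|` of points of `A`. -/
theorem exists_equidistributed_interval (N : ℕ) (hN : 0 < N) (A : Finset ℕ)
    (hA : A ⊆ Finset.Icc 1 N) (δ : ℝ) (hδ0 : 0 < δ) (hδ1 : δ ≤ 1)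
    (hcard : (A.card : ℝ) = δ * N) (k : ℕ) (hk : 2 ≤ k) :
    ∃ e : ℕ → ℕ, e k ≤ N ∧ (∀ i < k, e i ≤ e (i + 1)) ∧
      (N : ℝ) * Real.exp (-(4 * k) * Real.log (4 * k) * Real.log (1 / δ)) ≤
        ((e k - e 0 : ℕ) : ℝ) ∧
      ∀ i < k, (e k - e 0) / k ≤ e (i + 1) - e i ∧
        δ * ((e (i + 1) - e i : ℕ) : ℝ) / 2 ≤
          ((A ∩ Finset.Ioc (e i) (e (i + 1))).card : ℝ) := by
  have hA' : A ∩ Finset.Ioc 0 N = A := Finset.inter_eq_left.mpr (by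
    intro x hx
    have h := hA hx
    simp only [Finset.mem_Icc] at h
    simp only [Finset.mem_Ioc]
    omega)
  have hcnt : δ * (N : ℝ) ≤ ((A ∩ Finset.Ioc 0 N).card : ℝ) := by
    rw [hA', hcard]
  obtain ⟨e, he0, hek, hemono, hlen, hparts⟩ :=
    key_lemma A δ hδ0 k hk N 0 N (Nat.zero_le N) (by omega) δ le_rfl hcnt
  refine ⟨e, hek, hemono, le_trans ?_ hlen, hparts⟩
  have hkR : (2 : ℝ) ≤ (k : ℝ) := by exact_mod_cast hk
  have hlogδ : Real.log δ ≤ 0 := Real.log_nonpos hδ0.le hδ1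
  have hlog1δ : Real.log (1 / δ) = -Real.log δ := by rw [one_div, Real.log_inv]
  have hδC : δ ^ ((4 * (k : ℝ) + 1) * Real.log (2 * k))
      = Real.exp (Real.log δ * ((4 * (k : ℝ) + 1) * Real.log (2 * k))) :=
    Real.rpow_def_of_pos hδ0 _
  have hlog4k : Real.log (4 * (k : ℝ)) = Real.log 2 + Real.log (2 * (k : ℝ)) := by
    rw [show (4 : ℝ) * (k : ℝ) = 2 * (2 * (k : ℝ)) by ring,
      Real.log_mul two_ne_zero (by positivity)]
  have hlog2k_le : Real.log (2 * (k : ℝ)) ≤ 4 * (k : ℝ) * Real.log 2 := by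
    have h1 : (2 * (k : ℝ)) ≤ (2 : ℝ) ^ (4 * k : ℕ) := by
      have h2 : 2 * k ≤ 2 ^ (4 * k) :=
        le_of_lt (lt_of_le_of_lt (by omega) (Nat.lt_two_pow_self (n := 4 * k)))
      exact_mod_cast h2
    calc Real.log (2 * (k : ℝ)) ≤ Real.log ((2 : ℝ) ^ (4 * k : ℕ)) :=
          Real.log_le_log (by positivity) h1
      _ = (4 * k : ℕ) * Real.log 2 := Real.log_pow _ _
      _ = 4 * (k : ℝ) * Real.log 2 := by push_cast; ring
  have hdiff : (4 * (k : ℝ) + 1) * Real.log (2 * (k : ℝ))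
      ≤ 4 * (k : ℝ) * Real.log (4 * (k : ℝ)) := by
    rw [hlog4k]
    nlinarith [hlog2k_le]
  have hexp : -(4 * (k : ℝ)) * Real.log (4 * (k : ℝ)) * Real.log (1 / δ)
      ≤ Real.log δ * ((4 * (k : ℝ) + 1) * Real.log (2 * (k : ℝ))) := by
    rw [hlog1δ]
    nlinarith [mul_nonneg (sub_nonneg.mpr hdiff) (neg_nonneg.mpr hlogδ)]
  have hfin : Real.exp (-(4 * (k : ℝ)) * Real.log (4 * (k : ℝ)) * Real.log (1 / δ))
      ≤ δ ^ ((4 * (k : ℝ) + 1) * Real.log (2 * k)) := by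
    rw [hδC]
    exact Real.exp_le_exp.mpr hexp
  have hN0 : (0 : ℝ) ≤ (N : ℝ) := by positivity
  exact mul_le_mul_of_nonneg_left hfin hN0
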